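/- Let x ∈ ℝⁿ be nonincreasing with associated partition P_x = {I₁,…,I_ρ} of {1,…,n} into blocks of equal coordinates. Then the fiber λ⁻¹(x) = {Uᵀ Diag(x) U : U ∈ O(n)} is a smooth submanifold of the symmetric matrices Sⁿ of dimension Σ_{1 ≤ i < j ≤ ρ} |I_i| |I_j|. -/

import Mathlib

open Matrix
open scoped Classical

attribute [local instance] Matrix.normedAddCommGroup Matrix.normedSpace

/-- `M` is a `C^k` manifold of dimension `d` around `x` (in an ambient normed space). -/
def IsCkManifoldAroundDim {E : Type*} [NormedAddCommGroup E] [NormedSpace ℝ E]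
    (k : ℕ∞) (d : ℕ) (M : Set E) (x : E) : Prop :=
  ∃ U : Set E, IsOpen U ∧ x ∈ U ∧ ∃ (φ ψ : E → E) (F : Submodule ℝ E),
    Module.finrank ℝ F = d ∧
    ContDiffOn ℝ k φ U ∧ ContDiffOn ℝ k ψ (φ '' U) ∧
    (∀ y ∈ U, ψ (φ y) = y) ∧ φ '' (M ∩ U) = (F : Set E) ∩ φ '' U


noncomputable section Helpers

def gl (l : List ℝ) (a : ℝ) : ℝ := (l.map (fun c => a - c)).prod

@[simp] lemma gl_nil (a : ℝ) : gl [] a = 1 := rfl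
@[simp] lemma gl_cons (c : ℝ) (t : List ℝ) (a : ℝ) : gl (c :: t) a = (a - c) * gl t a := by
  simp [gl]

def dgl : List ℝ → ℝ → ℝ
  | [], _ => 0
  | c :: t, a => gl t a + (a - c) * dgl t a

def nu (l : List ℝ) (a b : ℝ) : ℝ :=
  if a = b then dgl l a else (gl l a - gl l b) / (a - b)

@[simp] lemma nu_nil (a b : ℝ) : nu [] a b = 0 := by
  unfold nu dgl
  split <;> simp

lemma nu_cons (c : ℝ) (t : List ℝ) (a b : ℝ) :
    nu (c :: t) a b = gl t b + (a - c) * nu t a b := by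
  unfold nu
  by_cases h : a = b
  · subst h; simp [dgl]
  · rw [if_neg h, if_neg h]
    have hab : a - b ≠ 0 := sub_ne_zero.mpr h
    field_simp
    simp only [gl_cons]
    ring

lemma gl_eq_zero {l : List ℝ} {a : ℝ} (h : a ∈ l) : gl l a = 0 := by
  unfold gl
  rw [List.prod_eq_zero_iff]
  exact List.mem_map.mpr ⟨a, h, sub_self a⟩

lemma gl_ne_zero {l : List ℝ} {a : ℝ} (h : a ∉ l) : gl l a ≠ 0 := by
  unfold gl
  rw [Ne, List.prod_eq_zero_iff]
  intro hc
  obtain ⟨c, hc1, hc2⟩ := List.mem_map.mp hc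
  exact h (by rwa [sub_eq_zero] at hc2 ▸ hc1)

lemma dgl_ne_zero {l : List ℝ} (hl : l.Nodup) {a : ℝ} (ha : a ∈ l) : dgl l a ≠ 0 := by
  induction l with
  | nil => simp at ha
  | cons c t ih =>
    rw [List.nodup_cons] at hl
    rcases List.mem_cons.mp ha with h | h
    · subst h
      simp only [dgl, sub_self, zero_mul, add_zero]
      exact gl_ne_zero hl.1
    · simp only [dgl]
      rw [gl_eq_zero h, zero_add]
      exact mul_ne_zero (sub_ne_zero.mpr (fun hac => hl.1 (hac ▸ h))) (ih hl.2 h)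

variable {n : ℕ}
local notation "Mat" => Matrix (Fin n) (Fin n) ℝ

lemma isBoundedBilinearMap_matmul :
    IsBoundedBilinearMap ℝ (fun p : Mat × Mat => p.1 * p.2) where
  add_left := fun A B C => add_mul A B C
  smul_left := fun c A B => smul_mul_assoc c A B
  add_right := fun A B C => mul_add A B C
  smul_right := fun c A B => mul_smul_comm c A B
  bound := by
    refine ⟨n + 1, by positivity, fun A B => ?_⟩
    rw [Matrix.norm_le_iff (by positivity)]
    intro i j
    calc ‖(A * B) i j‖ = ‖∑ k, A i k * B k j‖ := by rw [Matrix.mul_apply]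
    _ ≤ ∑ k, ‖A i k * B k j‖ := norm_sum_le _ _
    _ ≤ ∑ _k : Fin n, ‖A‖ * ‖B‖ := by
        refine Finset.sum_le_sum fun k _ => ?_
        rw [norm_mul]
        exact mul_le_mul (A.norm_entry_le_entrywise_sup_norm) (B.norm_entry_le_entrywise_sup_norm)
          (norm_nonneg _) (norm_nonneg _)
    _ ≤ (n + 1) * ‖A‖ * ‖B‖ := by
        simp [Finset.sum_const]
        nlinarith [norm_nonneg A, norm_nonneg B, mul_nonneg (norm_nonneg A) (norm_nonneg B)]

lemma HasFDerivAt.matmul {X : Type*} [NormedAddCommGroup X] [NormedSpace ℝ X]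
    {f g : X → Mat} {f' g' : X →L[ℝ] Mat} {a : X}
    (hf : HasFDerivAt f f' a) (hg : HasFDerivAt g g' a) :
    HasFDerivAt (fun y => f y * g y)
      ((isBoundedBilinearMap_matmul.deriv (f a, g a)).comp (f'.prod g')) a :=
  (isBoundedBilinearMap_matmul.hasFDerivAt (f a, g a)).comp (f := fun y => (f y, g y)) a (hf.prodMk hg)

lemma matmul_deriv_apply {X : Type*} [NormedAddCommGroup X] [NormedSpace ℝ X]
    (A B : Mat) (f' g' : X →L[ℝ] Mat) (v : X) :
    ((isBoundedBilinearMap_matmul.deriv (A, B)).comp (f'.prod g')) v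
      = A * g' v + f' v * B := by
  rfl

lemma ContDiff.matmul {X : Type*} [NormedAddCommGroup X] [NormedSpace ℝ X]
    {k : WithTop ℕ∞} {f g : X → Mat} (hf : ContDiff ℝ k f) (hg : ContDiff ℝ k g) :
    ContDiff ℝ k fun y => f y * g y :=
  isBoundedBilinearMap_matmul.contDiff.comp (hf.prodMk hg)

lemma ContDiffOn.matmul {X : Type*} [NormedAddCommGroup X] [NormedSpace ℝ X]
    {k : WithTop ℕ∞} {f g : X → Mat} {s : Set X}
    (hf : ContDiffOn ℝ k f s) (hg : ContDiffOn ℝ k g s) :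
    ContDiffOn ℝ k (fun y => f y * g y) s :=
  isBoundedBilinearMap_matmul.contDiff.comp_contDiffOn (hf.prodMk hg)

lemma contDiff_entry (p q : Fin n) {k : WithTop ℕ∞} :
    ContDiff ℝ k (fun A : Matrix (Fin n) (Fin n) ℝ => A p q) :=
  (LinearMap.toContinuousLinearMap
    { toFun := fun A : Matrix (Fin n) (Fin n) ℝ => A p q
      map_add' := fun _ _ => rfl
      map_smul' := fun _ _ => by simp [RingHom.id_apply] }).contDiff

lemma contDiff_det {k : WithTop ℕ∞} :
    ContDiff ℝ k (fun A : Matrix (Fin n) (Fin n) ℝ => A.det) := by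
  have : (fun A : Matrix (Fin n) (Fin n) ℝ => A.det) =
      fun A => ∑ σ : Equiv.Perm (Fin n), ((Equiv.Perm.sign σ : ℤ) : ℝ) * ∏ i, A (σ i) i := by
    funext A; rw [Matrix.det_apply]; apply Finset.sum_congr rfl; intro σ _; simp [Units.smul_def, zsmul_eq_mul]
  rw [this]
  refine ContDiff.sum fun σ _ => ContDiff.mul contDiff_const ?_
  exact contDiff_prod fun i _ => contDiff_entry (σ i) i

lemma contDiff_adjugate {k : WithTop ℕ∞} :
    ContDiff ℝ k (fun A : Matrix (Fin n) (Fin n) ℝ => A.adjugate) := by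
  refine contDiff_pi.mpr ?_
  intro p
  refine contDiff_pi.mpr ?_
  intro q
  have : (fun A : Matrix (Fin n) (Fin n) ℝ => A.adjugate p q) =
      (fun A : Matrix (Fin n) (Fin n) ℝ => A.det) ∘
        (fun A => A.updateRow q (Pi.single p 1)) := by
    funext A; simp [Matrix.adjugate_apply]
  rw [this]
  refine contDiff_det.comp ?_
  refine contDiff_pi.mpr ?_; intro i; refine contDiff_pi.mpr ?_; intro j
  by_cases h : i = q
  · subst h
    simpa [Matrix.updateRow_apply] using contDiff_const
  · have : (fun A : Matrix (Fin n) (Fin n) ℝ => A.updateRow q (Pi.single p 1) i j)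
        = fun A => A i j := by funext A; simp [Matrix.updateRow_apply, h]
    rw [this]; exact contDiff_entry i j

lemma contDiffOn_matinv {k : WithTop ℕ∞} :
    ContDiffOn ℝ k (fun A : Matrix (Fin n) (Fin n) ℝ => A⁻¹)
      {A : Matrix (Fin n) (Fin n) ℝ | IsUnit A.det} := by
  have : ∀ A ∈ {A : Matrix (Fin n) (Fin n) ℝ | IsUnit A.det},
      A⁻¹ = (A.det)⁻¹ • A.adjugate := by
    intro A _; rw [Matrix.inv_def, Ring.inverse_eq_inv']
  refine ContDiffOn.congr ?_ this
  refine ContDiffOn.fun_smul ?_ contDiff_adjugate.contDiffOn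
  intro A hA
  refine (ContDiffAt.contDiffWithinAt ?_)
  exact (contDiff_det.contDiffAt).inv (by simpa [isUnit_iff_ne_zero] using hA)

lemma isOpen_unitDet : IsOpen {A : Matrix (Fin n) (Fin n) ℝ | IsUnit A.det} := by
  have : {A : Matrix (Fin n) (Fin n) ℝ | IsUnit A.det}
      = (fun A : Matrix (Fin n) (Fin n) ℝ => A.det) ⁻¹' {t : ℝ | t ≠ 0} := by
    ext A; simp [isUnit_iff_ne_zero]
  rw [this]
  exact IsOpen.preimage (contDiff_det (k := 0)).continuous (isOpen_ne)

lemma contDiffAt_matinv_comp {X : Type*} [NormedAddCommGroup X] [NormedSpace ℝ X]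
    {k : WithTop ℕ∞} {f : X → Mat} {a : X} (hf : ContDiffAt ℝ k f a)
    (h1 : IsUnit (f a).det) :
    ContDiffAt ℝ k (fun y => (f y)⁻¹) a := by
  have : ContDiffAt ℝ k (fun A : Mat => A⁻¹) (f a) :=
    contDiffOn_matinv.contDiffAt (isOpen_unitDet.mem_nhds h1)
  exact this.comp a hf

lemma eventually_isUnit_det {X : Type*} [TopologicalSpace X]
    {f : X → Mat} {a : X} (hf : ContinuousAt f a) (h1 : IsUnit (f a).det) :
    ∀ᶠ y in nhds a, IsUnit (f y).det :=
  hf.eventually_mem (isOpen_unitDet.mem_nhds h1)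

/-- derivative of `y ↦ (f y)⁻¹` at a point where `f a = 1`. -/
lemma hasFDerivAt_matinv_one {X : Type*} [NormedAddCommGroup X] [NormedSpace ℝ X]
    {f : X → Mat} {L : X →L[ℝ] Mat} {a : X}
    (hcd : ContDiffAt ℝ ⊤ f a) (hL : HasFDerivAt f L a) (h1 : f a = 1) :
    HasFDerivAt (fun y => (f y)⁻¹) (-L) a := by
  set h := fun y => (f y)⁻¹ with hh
  have hunit : IsUnit (f a).det := by rw [h1]; simp
  have hcdh : ContDiffAt ℝ ⊤ h a := contDiffAt_matinv_comp hcd hunit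
  have hdh : HasFDerivAt h (fderiv ℝ h a) a :=
    (hcdh.differentiableAt (by simp)).hasFDerivAt
  have hprod := hL.matmul hdh
  have hev : (fun y => f y * h y) =ᶠ[nhds a] fun _ => (1 : Mat) := by
    filter_upwards [eventually_isUnit_det hL.differentiableAt.continuousAt hunit] with y hy
    exact Matrix.mul_nonsing_inv _ hy
  have hconst : HasFDerivAt (fun _ : X => (1 : Mat)) (0 : X →L[ℝ] Mat) a := hasFDerivAt_const _ _
  have := (hprod.congr_of_eventuallyEq hev.symm).unique hconst
  have key : ∀ v, f a * fderiv ℝ h a v + L v * h a = 0 := by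
    intro v
    have := congrArg (fun (M : X →L[ℝ] Mat) => M v) this
    exact (matmul_deriv_apply _ _ L _ v).symm.trans this
  have : ∀ v, fderiv ℝ h a v = -L v := by
    intro v
    have := key v
    rw [h1, one_mul] at this
    have h2 : h a = 1 := by simp [hh, h1]
    rw [h2, mul_one] at this
    have := eq_neg_of_add_eq_zero_left this
    exact this
  have hext : fderiv ℝ h a = -L := by
    refine ContinuousLinearMap.ext fun v => ?_
    rw [ContinuousLinearMap.neg_apply]
    exact this v
  rw [← hext]
  exact hdh

/-- entrywise multiplication by a fixed coefficient matrix, as a CLM -/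
def entrywiseL (μ : Mat) : Mat →L[ℝ] Mat :=
  LinearMap.toContinuousLinearMap
    { toFun := fun S => Matrix.of fun p q => μ p q * S p q
      map_add' := by intro S T; ext p q; simp [mul_add]
      map_smul' := by intro c S; ext p q; simp [Matrix.smul_apply]; ring }

@[simp] lemma entrywiseL_apply (μ : Mat) (S : Mat) (p q : Fin n) :
    entrywiseL μ S p q = μ p q * S p q := rfl

def gM (l : List ℝ) (Y : Mat) : Mat := (l.map (fun c => Y - c • (1 : Mat))).prod

@[simp] lemma gM_nil (Y : Mat) : gM [] Y = 1 := rfl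
@[simp] lemma gM_cons (c : ℝ) (t : List ℝ) (Y : Mat) :
    gM (c :: t) Y = (Y - c • 1) * gM t Y := by simp [gM]

lemma contDiff_gM (l : List ℝ) {k : WithTop ℕ∞} : ContDiff ℝ k (gM (n := n) l) := by
  induction l with
  | nil => exact contDiff_const
  | cons c t ih =>
    have : (gM (c :: t)) = fun Y : Mat => (Y - c • 1) * gM t Y := by
      funext Y; simp
    rw [this]
    exact ContDiff.matmul (contDiff_id.sub contDiff_const) ih

lemma gM_diagonal (l : List ℝ) (f : Fin n → ℝ) :
    gM l (Matrix.diagonal f) = Matrix.diagonal (fun p => gl l (f p)) := by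
  induction l with
  | nil => simp [gl_nil]
  | cons c t ih =>
    rw [gM_cons, ih]
    have : (Matrix.diagonal f - c • (1 : Mat)) = Matrix.diagonal (fun p => f p - c) := by
      rw [Matrix.smul_one_eq_diagonal, Matrix.diagonal_sub]
    rw [this, Matrix.diagonal_mul_diagonal]
    simp only [gl_cons]

lemma hasFDerivAt_gM (l : List ℝ) (x : Fin n → ℝ) :
    HasFDerivAt (gM l) (entrywiseL (Matrix.of fun p q => nu l (x p) (x q)))
      (Matrix.diagonal x) := by
  induction l with
  | nil =>
    have h0 : entrywiseL (n := n) (Matrix.of fun p q => nu [] (x p) (x q)) = 0 := by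
      refine ContinuousLinearMap.ext fun S => ?_
      ext p q
      simp [nu_nil]
    rw [show gM (n := n) [] = fun _ => (1 : Mat) from rfl, h0]
    exact hasFDerivAt_const _ _
  | cons c t ih =>
    have key : HasFDerivAt (fun Y : Mat => (Y - c • 1) * gM t Y) _ (Matrix.diagonal x) :=
      HasFDerivAt.matmul ((hasFDerivAt_id _).sub_const (c • 1)) ih
    have heq : (fun Y : Mat => (Y - c • 1) * gM t Y) = gM (c :: t) := by
      funext Y; simp
    rw [heq] at key
    refine key.congr_fderiv ?_
    refine ContinuousLinearMap.ext fun S => ?_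
    erw [matmul_deriv_apply]
    ext p q
    have hd : (Matrix.diagonal x - c • (1 : Mat)) = Matrix.diagonal (fun p => x p - c) := by
      rw [Matrix.smul_one_eq_diagonal, Matrix.diagonal_sub]
    rw [Matrix.add_apply, hd, gM_diagonal, Matrix.diagonal_mul, Matrix.mul_diagonal]
    show (x p - c) * (nu t (x p) (x q) * S p q) + S p q * gl t (x q) = nu (c :: t) (x p) (x q) * S p q
    rw [nu_cons]
    ring

/-- `S ↦ (p q ↦ α p q * S p q + β p q * S q p)` as a CLM. -/
def mixL (α β : Mat) : Mat →L[ℝ] Mat :=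
  LinearMap.toContinuousLinearMap
    { toFun := fun S => Matrix.of fun p q => α p q * S p q + β p q * S q p
      map_add' := by intro S T; ext p q; simp [Matrix.add_apply]; ring
      map_smul' := by intro c S; ext p q; simp [Matrix.smul_apply]; ring }

@[simp] lemma mixL_apply (α β : Mat) (S : Mat) (p q : Fin n) :
    mixL α β S p q = α p q * S p q + β p q * S q p := rfl

variable (x : Fin n → ℝ)

/-- projection onto symmetric part supported on pairs with distinct `x`-values -/
def piT : Mat →L[ℝ] Mat :=
  mixL (Matrix.of fun p q => if x p = x q then 0 else 1/2)
       (Matrix.of fun p q => if x p = x q then 0 else 1/2)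

/-- projection onto skew part supported on pairs with distinct `x`-values -/
def piK : Mat →L[ℝ] Mat :=
  mixL (Matrix.of fun p q => if x p = x q then 0 else 1/2)
       (Matrix.of fun p q => if x p = x q then 0 else -(1/2))

lemma piT_apply (S : Mat) (p q : Fin n) :
    piT x S p q = if x p = x q then 0 else (S p q + S q p)/2 := by
  simp only [piT, mixL_apply, Matrix.of_apply]
  split <;> ring

lemma piK_apply (S : Mat) (p q : Fin n) :
    piK x S p q = if x p = x q then 0 else (S p q - S q p)/2 := by
  simp only [piK, mixL_apply, Matrix.of_apply]
  split <;> ring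

/-- the subspace of symmetric matrices supported on pairs with distinct `x`-values -/
def Tsub : Submodule ℝ Mat where
  carrier := {A | ∀ p q, (x p = x q → A p q = 0) ∧ A p q = A q p}
  add_mem' := by
    intro A B hA hB
    intro p q
    refine ⟨fun h => ?_, ?_⟩
    · simp [Matrix.add_apply, (hA p q).1 h, (hB p q).1 h]
    · simp [Matrix.add_apply, (hA p q).2, (hB p q).2]
  zero_mem' := by intro p q; simp
  smul_mem' := by
    intro c A hA p q
    refine ⟨fun h => ?_, ?_⟩
    · simp [Matrix.smul_apply, (hA p q).1 h]
    · simp [Matrix.smul_apply, (hA p q).2]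

lemma piT_mem (S : Mat) : piT x S ∈ Tsub x := by
  intro p q
  constructor
  · intro h; rw [piT_apply, if_pos h]
  · rw [piT_apply, piT_apply]
    by_cases h : x p = x q
    · rw [if_pos h, if_pos h.symm]
    · rw [if_neg h, if_neg (fun hh => h hh.symm)]
      ring

lemma piT_of_mem {A : Mat} (hA : A ∈ Tsub x) : piT x A = A := by
  ext p q
  rw [piT_apply]
  by_cases h : x p = x q
  · rw [if_pos h, (hA p q).1 h]
  · rw [if_neg h, ← (hA p q).2]
    ring

/-- the index finset for the dimension -/
def idxF : Finset (Fin n × Fin n) :=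
  Finset.univ.filter fun p : Fin n × Fin n => p.1 < p.2 ∧ x p.1 ≠ x p.2

/-- coordinates: `Tsub x` is linearly equivalent to functions on `idxF x` -/
def TsubEquiv : Tsub x ≃ₗ[ℝ] ({s // s ∈ idxF x} → ℝ) where
  toFun A := fun s => (A : Mat) s.1.1 s.1.2
  map_add' := by intro A B; funext s; simp [Matrix.add_apply]
  map_smul' := by intro c A; funext s; simp [Matrix.smul_apply]
  invFun c := ⟨Matrix.of fun p q =>
      if h : p < q ∧ x p ≠ x q then c ⟨(p, q), by simp [idxF]; exact h⟩
      else if h' : q < p ∧ x q ≠ x p then c ⟨(q, p), by simp [idxF]; exact h'⟩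
      else 0, by
    intro p q
    constructor
    · intro h
      simp only [Matrix.of_apply]
      rw [dif_neg (fun hc => hc.2 h), dif_neg (fun hc => hc.2 h.symm)]
    · simp only [Matrix.of_apply]
      by_cases h1 : p < q ∧ x p ≠ x q
      · rw [dif_pos h1, dif_neg (fun hc => absurd h1.1 (not_lt.mpr hc.1.le)), dif_pos h1]
      · rw [dif_neg h1]
        by_cases h2 : q < p ∧ x q ≠ x p
        · rw [dif_pos h2, dif_pos h2]
        · rw [dif_neg h2, dif_neg h2, dif_neg h1]⟩
  left_inv := by
    intro ⟨A, hA⟩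
    apply Subtype.ext
    change Matrix.of _ = A
    ext p q
    simp only [Matrix.of_apply]
    by_cases h1 : p < q ∧ x p ≠ x q
    · rw [dif_pos h1]
    · rw [dif_neg h1]
      by_cases h2 : q < p ∧ x q ≠ x p
      · rw [dif_pos h2]
        exact (hA p q).2.symm
      · rw [dif_neg h2]
        push_neg at h1 h2
        have hxeq : x p = x q := by
          rcases lt_trichotomy p q with hpq | hpq | hpq
          · exact h1 hpq
          · rw [hpq]
          · exact (h2 hpq).symm
        exact ((hA p q).1 hxeq).symm
  right_inv := by
    intro c
    funext s
    obtain ⟨⟨p, q⟩, hs⟩ := s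
    have h : p < q ∧ x p ≠ x q := by simpa [idxF] using hs
    simp only [Matrix.of_apply]
    rw [dif_pos h]

lemma finrank_Tsub :
    Module.finrank ℝ (Tsub x) = (idxF x).card := by
  rw [(TsubEquiv x).finrank_eq]
  rw [Module.finrank_fintype_fun_eq_card]
  exact Fintype.card_coe _

section MainDefs
variable (x : Fin n → ℝ)

/-- list of distinct values of `x` -/
def lx : List ℝ := (List.ofFn x).dedup

lemma mem_lx (p : Fin n) : x p ∈ lx x := by
  rw [lx, List.mem_dedup]
  exact List.mem_ofFn.mpr ⟨p, rfl⟩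

lemma nodup_lx : (lx x).Nodup := List.nodup_dedup _

/-- the transpose as a CLM -/
def transCLM : Mat →L[ℝ] Mat :=
  LinearMap.toContinuousLinearMap
    { toFun := fun A : Mat => Aᵀ
      map_add' := fun A B => Matrix.transpose_add A B
      map_smul' := fun c A => Matrix.transpose_smul c A }

@[simp] lemma transCLM_apply (A : Mat) : transCLM A = Aᵀ := rfl

def KT : Mat →L[ℝ] Mat :=
  mixL (Matrix.of fun p q => if x p = x q then 0 else (x p - x q)⁻¹) 0

lemma KT_apply (S : Mat) (p q : Fin n) :
    KT x S p q = if x p = x q then 0 else S p q / (x p - x q) := by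
  simp only [KT, mixL_apply, Matrix.of_apply, Matrix.zero_apply, zero_mul, add_zero]
  split <;> [simp; rw [div_eq_inv_mul]]

def Th : Mat →L[ℝ] Mat :=
  mixL (Matrix.of fun p q => if x p = x q then (dgl (lx x) (x p))⁻¹ else 0) 0

lemma Th_apply (S : Mat) (p q : Fin n) :
    Th x S p q = if x p = x q then (dgl (lx x) (x p))⁻¹ * S p q else 0 := by
  simp only [Th, mixL_apply, Matrix.of_apply, Matrix.zero_apply, zero_mul, add_zero]
  split <;> simp

/-- the chart map -/
def phiMap (Y : Mat) : Mat :=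
  piT x (Y - Matrix.diagonal x) + piK x Y + Th x (gM (lx x) Y)

/-- Cayley-type orthogonal parametrization -/
def QMap (A : Mat) : Mat :=
  (1 - (2⁻¹ : ℝ) • KT x A)⁻¹ * (1 + (2⁻¹ : ℝ) • KT x A)

def PhiT (A : Mat) : Mat := (QMap x A)ᵀ * (Matrix.diagonal x * QMap x A)

def Mset : Set Mat :=
  {X : Mat | ∃ U : Mat, Uᵀ * U = 1 ∧ X = Uᵀ * Matrix.diagonal x * U}

lemma diagonal_mem_Mset : Matrix.diagonal x ∈ Mset x :=
  ⟨1, by simp, by simp⟩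

lemma transpose_eq_of_mem {X : Mat} (hX : X ∈ Mset x) : Xᵀ = X := by
  obtain ⟨U, hU, rfl⟩ := hX
  rw [Matrix.transpose_mul, Matrix.transpose_mul, Matrix.transpose_transpose,
    Matrix.diagonal_transpose, Matrix.mul_assoc]

lemma gM_conj (l : List ℝ) {U : Mat} (hU : Uᵀ * U = 1) (A : Mat) :
    gM l (Uᵀ * A * U) = Uᵀ * gM l A * U := by
  have hU' : U * Uᵀ = 1 := mul_eq_one_comm.mp hU
  induction l with
  | nil => rw [gM_nil, gM_nil, Matrix.mul_one, hU]
  | cons c t ih =>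
    rw [gM_cons, gM_cons, ih]
    have h1 : Uᵀ * A * U - c • (1 : Mat) = Uᵀ * (A - c • 1) * U := by
      rw [Matrix.mul_sub, Matrix.sub_mul]
      congr 1
      rw [Matrix.mul_smul, Matrix.mul_one, Matrix.smul_mul, hU]
    rw [h1]
    simp only [Matrix.mul_assoc]
    rw [← Matrix.mul_assoc U Uᵀ, hU', Matrix.one_mul]

lemma gM_diagonal_x_eq_zero : gM (lx x) (Matrix.diagonal x) = 0 := by
  rw [gM_diagonal]
  have : (fun p => gl (lx x) (x p)) = fun _ => (0 : ℝ) := by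
    funext p; exact gl_eq_zero (mem_lx x p)
  rw [this, Matrix.diagonal_zero]

lemma gM_eq_zero_of_mem {X : Mat} (hX : X ∈ Mset x) : gM (lx x) X = 0 := by
  obtain ⟨U, hU, rfl⟩ := hX
  rw [gM_conj (lx x) hU, gM_diagonal_x_eq_zero, Matrix.mul_zero, Matrix.zero_mul]

lemma piK_eq_zero_of_symm {X : Mat} (hX : Xᵀ = X) : piK x X = 0 := by
  ext p q
  rw [piK_apply]
  have : X q p = X p q := by
    conv_lhs => rw [← hX]
    rfl
  split <;> simp [this]

lemma phiMap_mem_Tsub {X : Mat} (hX : X ∈ Mset x) : phiMap x X ∈ Tsub x := by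
  rw [phiMap, piK_eq_zero_of_symm x (transpose_eq_of_mem x hX), gM_eq_zero_of_mem x hX,
    map_zero, add_zero, add_zero]
  exact piT_mem x _

lemma phiMap_diagonal : phiMap x (Matrix.diagonal x) = 0 := by
  rw [phiMap, sub_self, map_zero, gM_diagonal_x_eq_zero, map_zero,
    piK_eq_zero_of_symm x (Matrix.diagonal_transpose x), zero_add, add_zero]

lemma KT_skew {A : Mat} (hA : A ∈ Tsub x) : (KT x A)ᵀ = -(KT x A) := by
  ext p q
  rw [Matrix.transpose_apply, Matrix.neg_apply, KT_apply, KT_apply]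
  by_cases h : x p = x q
  · rw [if_pos h, if_pos h.symm, neg_zero]
  · rw [if_neg h, if_neg (fun hc => h hc.symm), (hA p q).2,
      show x q - x p = -(x p - x q) by ring, div_neg]

lemma QMap_orth {A : Mat} (hA : A ∈ Tsub x)
    (h1 : IsUnit (1 - (2⁻¹ : ℝ) • KT x A).det)
    (h2 : IsUnit (1 + (2⁻¹ : ℝ) • KT x A).det) :
    (QMap x A)ᵀ * QMap x A = 1 := by
  set h : Mat := (2⁻¹ : ℝ) • KT x A with hh
  have hskew : hᵀ = -h := by
    rw [hh, Matrix.transpose_smul, KT_skew x hA, smul_neg]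
  have hQt : (QMap x A)ᵀ = (1 - h) * (1 + h)⁻¹ := by
    rw [QMap, Matrix.transpose_mul, Matrix.transpose_nonsing_inv]
    rw [Matrix.transpose_add, Matrix.transpose_sub, Matrix.transpose_one, hskew]
    rw [sub_neg_eq_add, ← sub_eq_add_neg]
  rw [hQt, QMap]
  have hcomm : (1 - h) * (1 + h) = (1 + h) * (1 - h) := by noncomm_ring
  calc (1 - h) * (1 + h)⁻¹ * ((1 - h)⁻¹ * (1 + h))
      = (1 - h) * ((1 + h)⁻¹ * (1 - h)⁻¹) * (1 + h) := by
        rw [Matrix.mul_assoc, Matrix.mul_assoc, Matrix.mul_assoc]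
    _ = (1 - h) * ((1 - h) * (1 + h))⁻¹ * (1 + h) := by rw [Matrix.mul_inv_rev]
    _ = (1 - h) * ((1 + h) * (1 - h))⁻¹ * (1 + h) := by rw [hcomm]
    _ = (1 - h) * ((1 - h)⁻¹ * (1 + h)⁻¹) * (1 + h) := by rw [Matrix.mul_inv_rev]
    _ = ((1 - h) * (1 - h)⁻¹) * ((1 + h)⁻¹ * (1 + h)) := by
        rw [Matrix.mul_assoc, Matrix.mul_assoc, Matrix.mul_assoc]
    _ = 1 := by rw [Matrix.mul_nonsing_inv _ h1, Matrix.nonsing_inv_mul _ h2, Matrix.one_mul]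

lemma PhiT_mem {A : Mat} (hA : A ∈ Tsub x)
    (h1 : IsUnit (1 - (2⁻¹ : ℝ) • KT x A).det)
    (h2 : IsUnit (1 + (2⁻¹ : ℝ) • KT x A).det) :
    PhiT x A ∈ Mset x :=
  ⟨QMap x A, QMap_orth x hA h1 h2, by rw [PhiT, Matrix.mul_assoc]⟩

lemma QMap_zero : QMap x 0 = 1 := by
  rw [QMap, map_zero, smul_zero, sub_zero, add_zero, inv_one, Matrix.one_mul]

lemma PhiT_zero : PhiT x 0 = Matrix.diagonal x := by
  rw [PhiT, QMap_zero, Matrix.transpose_one, Matrix.mul_one, Matrix.one_mul]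

end MainDefs

section Analysis
variable (x : Fin n → ℝ)

lemma contDiff_phiMap {k : WithTop ℕ∞} : ContDiff ℝ k (phiMap x) := by
  unfold phiMap
  refine ContDiff.add (ContDiff.add ?_ ?_) ?_
  · exact (piT x).contDiff.comp (contDiff_id.sub contDiff_const)
  · exact (piK x).contDiff
  · exact (Th x).contDiff.comp (contDiff_gM _)

def OmegaS : Set Mat :=
  {A : Mat | IsUnit (1 - (2⁻¹ : ℝ) • KT x A).det ∧ IsUnit (1 + (2⁻¹ : ℝ) • KT x A).det}

lemma isOpen_OmegaS : IsOpen (OmegaS x) := by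
  have hc1 : Continuous (fun A : Mat => 1 - (2⁻¹ : ℝ) • KT x A) :=
    continuous_const.sub ((KT x).continuous.fun_const_smul _)
  have hc2 : Continuous (fun A : Mat => 1 + (2⁻¹ : ℝ) • KT x A) :=
    continuous_const.add ((KT x).continuous.fun_const_smul _)
  exact ((isOpen_unitDet.preimage hc1).inter (isOpen_unitDet.preimage hc2))

lemma zero_mem_OmegaS : (0 : Mat) ∈ OmegaS x := by
  constructor <;> simp [map_zero]

lemma contDiffOn_QMap {k : WithTop ℕ∞} : ContDiffOn ℝ k (QMap x) (OmegaS x) := by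
  unfold QMap
  refine ContDiffOn.matmul ?_ ?_
  · refine ContDiffOn.comp (contDiffOn_matinv)
      ((contDiff_const.sub ((KT x).contDiff.const_smul _)).contDiffOn) ?_
    intro A hA
    exact hA.1
  · exact (contDiff_const.add ((KT x).contDiff.const_smul _)).contDiffOn

lemma contDiffOn_PhiT {k : WithTop ℕ∞} : ContDiffOn ℝ k (PhiT x) (OmegaS x) := by
  unfold PhiT
  refine ContDiffOn.matmul ?_ (ContDiffOn.matmul contDiffOn_const (contDiffOn_QMap x))
  exact ((transCLM (n := n)).contDiff).comp_contDiffOn (contDiffOn_QMap x)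

lemma hasFDerivAt_phiMap :
    HasFDerivAt (phiMap x) (ContinuousLinearMap.id ℝ Mat) (Matrix.diagonal x) := by
  have h1 : HasFDerivAt (fun Y : Mat => piT x (Y - Matrix.diagonal x))
      ((piT x).comp (ContinuousLinearMap.id ℝ Mat)) (Matrix.diagonal x) :=
    ((piT x).hasFDerivAt).comp _ ((hasFDerivAt_id _).sub_const _)
  have h2 : HasFDerivAt (fun Y : Mat => piK x Y) (piK x) (Matrix.diagonal x) :=
    (piK x).hasFDerivAt
  have h3 : HasFDerivAt (fun Y : Mat => Th x (gM (lx x) Y))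
      ((Th x).comp (entrywiseL (Matrix.of fun p q => nu (lx x) (x p) (x q))))
      (Matrix.diagonal x) :=
    ((Th x).hasFDerivAt).comp _ (hasFDerivAt_gM (lx x) x)
  have hsum := (h1.add h2).add h3
  have : phiMap x = fun Y : Mat =>
      piT x (Y - Matrix.diagonal x) + piK x Y + Th x (gM (lx x) Y) := rfl
  rw [this]
  refine hsum.congr_fderiv ?_
  refine ContinuousLinearMap.ext fun S => ?_
  ext p q
  show piT x S p q + piK x S p q + Th x (entrywiseL (Matrix.of fun p q => nu (lx x) (x p) (x q)) S) p q = S p q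
  rw [piT_apply, piK_apply, Th_apply]
  by_cases h : x p = x q
  · rw [if_pos h, if_pos h, if_pos h]
    simp only [entrywiseL_apply, Matrix.of_apply]
    have hnu : nu (lx x) (x p) (x q) = dgl (lx x) (x p) := by
      rw [← h]; unfold nu; rw [if_pos rfl]
    rw [hnu, ← mul_assoc, inv_mul_cancel₀ (dgl_ne_zero (nodup_lx x) (mem_lx x p)), one_mul]
    simp
  · rw [if_neg h, if_neg h, if_neg h]
    ring

def LTx : Mat →L[ℝ] Mat :=
  LinearMap.toContinuousLinearMap
    { toFun := fun v => (KT x v)ᵀ * Matrix.diagonal x + Matrix.diagonal x * KT x v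
      map_add' := by
        intro a b
        simp only [map_add, Matrix.transpose_add, Matrix.add_mul, Matrix.mul_add]
        abel
      map_smul' := by
        intro c a
        simp only [_root_.map_smul, Matrix.transpose_smul, Matrix.smul_mul, Matrix.mul_smul,
          RingHom.id_apply, smul_add] }

@[simp] lemma LTx_apply (v : Mat) :
    LTx x v = (KT x v)ᵀ * Matrix.diagonal x + Matrix.diagonal x * KT x v := rfl

lemma hasFDerivAt_QMap : HasFDerivAt (QMap x) (KT x : Mat →L[ℝ] Mat) 0 := by
  have hu : HasFDerivAt (fun A : Mat => 1 - (2⁻¹ : ℝ) • KT x A)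
      (-((2⁻¹ : ℝ) • (KT x : Mat →L[ℝ] Mat))) 0 := by
    have : (fun A : Mat => 1 - (2⁻¹ : ℝ) • KT x A)
        = fun A : Mat => (-((2⁻¹ : ℝ) • (KT x : Mat →L[ℝ] Mat))) A + 1 := by
      funext A
      simp [sub_eq_neg_add]
    rw [this]
    exact ((-((2⁻¹ : ℝ) • (KT x : Mat →L[ℝ] Mat))).hasFDerivAt).add_const 1
  have hucd : ContDiffAt ℝ ⊤ (fun A : Mat => 1 - (2⁻¹ : ℝ) • KT x A) 0 :=
    (contDiff_const.sub ((KT x).contDiff.const_smul _)).contDiffAt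
  have hu0 : (fun A : Mat => 1 - (2⁻¹ : ℝ) • KT x A) 0 = 1 := by simp
  have hinv := hasFDerivAt_matinv_one hucd hu hu0
  replace hinv := hinv.congr_fderiv (neg_neg _)
  have hv : HasFDerivAt (fun A : Mat => 1 + (2⁻¹ : ℝ) • KT x A)
      ((2⁻¹ : ℝ) • (KT x : Mat →L[ℝ] Mat)) 0 := by
    have : (fun A : Mat => 1 + (2⁻¹ : ℝ) • KT x A)
        = fun A : Mat => (((2⁻¹ : ℝ) • (KT x : Mat →L[ℝ] Mat))) A + 1 := by
      funext A
      simp [add_comm]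
    rw [this]
    exact ((((2⁻¹ : ℝ) • (KT x : Mat →L[ℝ] Mat))).hasFDerivAt).add_const 1
  have hQ := hinv.matmul hv
  have : QMap x = fun A : Mat =>
      (fun A : Mat => ((fun B : Mat => 1 - (2⁻¹ : ℝ) • KT x B) A)⁻¹) A *
      (fun A : Mat => 1 + (2⁻¹ : ℝ) • KT x A) A := rfl
  rw [this]
  refine hQ.congr_fderiv ?_
  refine ContinuousLinearMap.ext fun S => ?_
  erw [matmul_deriv_apply]
  show (1 - (2⁻¹ : ℝ) • KT x 0)⁻¹ * ((2⁻¹ : ℝ) • KT x S) + ((2⁻¹ : ℝ) • KT x S) * (1 + (2⁻¹ : ℝ) • KT x 0) = KT x S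
  rw [map_zero, smul_zero, sub_zero, add_zero, inv_one, Matrix.one_mul, Matrix.mul_one]
  rw [← add_smul]
  norm_num

lemma hasFDerivAt_PhiT : HasFDerivAt (PhiT x) (LTx x) 0 := by
  have hQ := hasFDerivAt_QMap x
  have hQt : HasFDerivAt (fun A : Mat => (QMap x A)ᵀ)
      ((transCLM (n := n)).comp (KT x : Mat →L[ℝ] Mat)) 0 :=
    ((transCLM (n := n)).hasFDerivAt).comp _ hQ
  have hDQ : HasFDerivAt (fun A : Mat => Matrix.diagonal x * QMap x A) _ 0 :=
    (hasFDerivAt_const (Matrix.diagonal x) 0).matmul hQ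
  have hP := hQt.matmul hDQ
  have : PhiT x = fun A : Mat => (QMap x A)ᵀ * (Matrix.diagonal x * QMap x A) := rfl
  rw [this]
  refine hP.congr_fderiv ?_
  refine ContinuousLinearMap.ext fun S => ?_
  erw [matmul_deriv_apply, matmul_deriv_apply]
  simp [QMap_zero]
  show Matrix.diagonal x * KT x S + (KT x S)ᵀ * Matrix.diagonal x = (KT x S)ᵀ * Matrix.diagonal x + Matrix.diagonal x * KT x S
  rw [add_comm]

end Analysis

section Eta
variable (x : Fin n → ℝ)

/-- inclusion of the subspace -/
def iotaT : Tsub x →L[ℝ] Mat := (Tsub x).subtypeL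

@[simp] lemma iotaT_apply (A : Tsub x) : iotaT x A = (A : Mat) := rfl

/-- `piT` corestricted to `Tsub` -/
def hatpi : Mat →L[ℝ] Tsub x :=
  ContinuousLinearMap.codRestrict (piT x) (Tsub x) (piT_mem x)

@[simp] lemma hatpi_apply (w : Mat) : (hatpi x w : Mat) = piT x w := rfl

def etaMap : Tsub x → Tsub x := fun A => hatpi x (phiMap x (PhiT x (iotaT x A)))

lemma etaMap_zero : etaMap x 0 = 0 := by
  have h0 : iotaT x (0 : Tsub x) = 0 := map_zero _
  apply Subtype.ext
  rw [etaMap, h0, PhiT_zero, phiMap_diagonal]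
  simp

lemma hasFDerivAt_etaMap :
    HasFDerivAt (etaMap x) (ContinuousLinearMap.id ℝ (Tsub x)) 0 := by
  have hι : HasFDerivAt (fun A : Tsub x => iotaT x A) (iotaT x) 0 := (iotaT x).hasFDerivAt
  have hP : HasFDerivAt (PhiT x) (LTx x) (iotaT x (0 : Tsub x)) := by
    rw [map_zero]; exact hasFDerivAt_PhiT x
  have hφ : HasFDerivAt (phiMap x) (ContinuousLinearMap.id ℝ Mat) (PhiT x (iotaT x 0)) := by
    rw [map_zero, PhiT_zero]; exact hasFDerivAt_phiMap x
  have hh : HasFDerivAt (fun w : Mat => hatpi x w) (hatpi x) (phiMap x (PhiT x (iotaT x 0))) :=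
    (hatpi x).hasFDerivAt
  have hcomp := hh.comp 0 (hφ.comp 0 (hP.comp 0 hι))
  have : etaMap x = (fun w => hatpi x w) ∘ (phiMap x) ∘ (PhiT x) ∘ (fun A => iotaT x A) := rfl
  rw [this]
  refine hcomp.congr_fderiv ?_
  refine ContinuousLinearMap.ext fun A => Subtype.ext ?_
  show piT x ((KT x (A : Mat))ᵀ * Matrix.diagonal x + Matrix.diagonal x * KT x (A : Mat)) = (A : Mat)
  ext p q
  rw [piT_apply]
  have hmem := A.2
  by_cases h : x p = x q
  · rw [if_pos h, (hmem p q).1 h]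
  · rw [if_neg h]
    have hqp : (A : Mat) q p = (A : Mat) p q := ((hmem p q).2).symm
    have e1 : ((KT x (A : Mat))ᵀ * Matrix.diagonal x + Matrix.diagonal x * KT x (A : Mat)) p q
        = (A : Mat) q p * (x q) / (x q - x p) + x p * ((A : Mat) p q / (x p - x q)) := by
      rw [Matrix.add_apply, Matrix.mul_diagonal, Matrix.diagonal_mul, Matrix.transpose_apply,
        KT_apply, KT_apply, if_neg (fun hc => h hc.symm), if_neg h]
      ring
    have e2 : ((KT x (A : Mat))ᵀ * Matrix.diagonal x + Matrix.diagonal x * KT x (A : Mat)) q p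
        = (A : Mat) p q * (x p) / (x p - x q) + x q * ((A : Mat) q p / (x q - x p)) := by
      rw [Matrix.add_apply, Matrix.mul_diagonal, Matrix.diagonal_mul, Matrix.transpose_apply,
        KT_apply, KT_apply, if_neg h, if_neg (fun hc => h hc.symm)]
      ring
    rw [e1, e2, hqp]
    have hne : x p - x q ≠ 0 := sub_ne_zero.mpr h
    have hne' : x q - x p ≠ 0 := sub_ne_zero.mpr (fun hc => h hc.symm)
    field_simp
    ring

lemma contDiffAt_etaMap {k : WithTop ℕ∞} : ContDiffAt ℝ k (etaMap x) 0 := by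
  have h1 : ContDiffAt ℝ k (fun A : Tsub x => iotaT x A) 0 := (iotaT x).contDiff.contDiffAt
  have h2 : ContDiffAt ℝ k (PhiT x) (iotaT x 0) := by
    rw [map_zero]
    exact (contDiffOn_PhiT x).contDiffAt ((isOpen_OmegaS x).mem_nhds (zero_mem_OmegaS x))
  have h3 : ContDiffAt ℝ k (phiMap x) (PhiT x (iotaT x 0)) := (contDiff_phiMap x).contDiffAt
  have h4 : ContDiffAt ℝ k (fun w : Mat => hatpi x w) (phiMap x (PhiT x (iotaT x 0))) :=
    (hatpi x).contDiff.contDiffAt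
  have h5 := h4.comp 0 (h3.comp 0 (h2.comp 0 h1))
  exact h5

lemma etaMap_image_nhds {S : Set (Tsub x)} (hS : S ∈ nhds (0 : Tsub x)) :
    etaMap x '' S ∈ nhds (0 : Tsub x) := by
  have hstrict : HasStrictFDerivAt (etaMap x)
      ((ContinuousLinearEquiv.refl ℝ (Tsub x) : Tsub x ≃L[ℝ] Tsub x) : Tsub x →L[ℝ] Tsub x) 0 := by
    have h := (contDiffAt_etaMap x (k := ((⊤ : ℕ∞) : WithTop ℕ∞))).hasStrictFDerivAt (by
      simp)
    replace h := h.congr_fderiv (hasFDerivAt_etaMap x).fderiv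
    exact h
  have hmap := hstrict.map_nhds_eq_of_equiv
  rw [etaMap_zero x] at hmap
  exact (Filter.ext_iff.mp hmap _).mp (Filter.image_mem_map hS)

end Eta

section MainLemma
variable (x : Fin n → ℝ)

lemma isUnit_toEquiv {L : Mat →L[ℝ] Mat} (h : IsUnit L) :
    ∃ e : Mat ≃L[ℝ] Mat, (e : Mat →L[ℝ] Mat) = L := by
  obtain ⟨u, rfl⟩ := h
  have h1 : ∀ v : Mat, (↑u⁻¹ : Mat →L[ℝ] Mat) ((↑u : Mat →L[ℝ] Mat) v) = v := by
    intro v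
    rw [← ContinuousLinearMap.mul_apply, u.inv_mul, ContinuousLinearMap.one_apply]
  have h2 : ∀ v : Mat, (↑u : Mat →L[ℝ] Mat) ((↑u⁻¹ : Mat →L[ℝ] Mat) v) = v := by
    intro v
    rw [← ContinuousLinearMap.mul_apply, u.mul_inv, ContinuousLinearMap.one_apply]
  refine ⟨{ toFun := (u : Mat →L[ℝ] Mat),
            invFun := (↑u⁻¹ : Mat →L[ℝ] Mat),
            map_add' := (u : Mat →L[ℝ] Mat).map_add,
            map_smul' := (u : Mat →L[ℝ] Mat).map_smul,
            left_inv := h1, right_inv := h2,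
            continuous_toFun := (u : Mat →L[ℝ] Mat).continuous,
            continuous_invFun := (↑u⁻¹ : Mat →L[ℝ] Mat).continuous }, rfl⟩

lemma main_at_diagonal :
    IsCkManifoldAroundDim (⊤ : ℕ∞) ((idxF x).card) (Mset x) (Matrix.diagonal x) := by
  classical
  have hφcd : ContDiff ℝ ((⊤ : ℕ∞) : WithTop ℕ∞) (phiMap x) := contDiff_phiMap x
  have hφstrict : HasStrictFDerivAt (phiMap x)
      ((ContinuousLinearEquiv.refl ℝ Mat : Mat ≃L[ℝ] Mat) : Mat →L[ℝ] Mat)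
      (Matrix.diagonal x) := by
    have h := (hφcd.contDiffAt (x := Matrix.diagonal x)).hasStrictFDerivAt
      (by simp)
    replace h := h.congr_fderiv (hasFDerivAt_phiMap x).fderiv
    exact h
  set P := hφstrict.toOpenPartialHomeomorph (phiMap x) with hPdef
  have hPcoe : ⇑P = phiMap x := hφstrict.toOpenPartialHomeomorph_coe
  have hPsrc : Matrix.diagonal x ∈ P.source := hφstrict.mem_toOpenPartialHomeomorph_source
  set Vset := (fderiv ℝ (phiMap x)) ⁻¹' {L : Mat →L[ℝ] Mat | IsUnit L} with hVdef
  have hVopen : IsOpen Vset :=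
    (Units.isOpen).preimage (hφcd.continuous_fderiv (by simp))
  have hDV : Matrix.diagonal x ∈ Vset := by
    have : fderiv ℝ (phiMap x) (Matrix.diagonal x) = ContinuousLinearMap.id ℝ Mat :=
      (hasFDerivAt_phiMap x).fderiv
    simp only [hVdef, Set.mem_preimage, this, Set.mem_setOf_eq]
    simpa [← ContinuousLinearMap.one_def] using isUnit_one
  set U₀ := P.source ∩ Vset with hU₀def
  have hU₀open : IsOpen U₀ := P.open_source.inter hVopen
  have hDU₀ : Matrix.diagonal x ∈ U₀ := ⟨hPsrc, hDV⟩
  -- neighborhood in the subspace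
  have hcontPhiI : ContinuousAt (fun A : Tsub x => PhiT x (iotaT x A)) 0 := by
    have h2 : ContDiffAt ℝ ((⊤ : ℕ∞) : WithTop ℕ∞) (PhiT x) (iotaT x 0) := by
      rw [map_zero]
      exact (contDiffOn_PhiT x).contDiffAt ((isOpen_OmegaS x).mem_nhds (zero_mem_OmegaS x))
    exact (h2.comp 0 ((iotaT x).contDiff.contDiffAt)).continuousAt
  set S₀ := ((fun A : Tsub x => PhiT x (iotaT x A)) ⁻¹' U₀) ∩ ((iotaT x) ⁻¹' (OmegaS x))
    with hS₀def
  have hS₀nhds : S₀ ∈ nhds (0 : Tsub x) := by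
    refine Filter.inter_mem ?_ ?_
    · apply hcontPhiI.preimage_mem_nhds
      rw [map_zero, PhiT_zero]
      exact hU₀open.mem_nhds hDU₀
    · apply ((iotaT x).continuous.continuousAt).preimage_mem_nhds
      rw [map_zero]
      exact (isOpen_OmegaS x).mem_nhds (zero_mem_OmegaS x)
  obtain ⟨ε, hε, hball⟩ := Metric.mem_nhds_iff.mp (etaMap_image_nhds x hS₀nhds)
  set U := U₀ ∩ (phiMap x) ⁻¹' (Metric.ball (0 : Mat) ε) with hUdef
  have hUopen : IsOpen U := hU₀open.inter ((Metric.isOpen_ball).preimage hφcd.continuous)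
  have hDU : Matrix.diagonal x ∈ U := by
    refine ⟨hDU₀, ?_⟩
    simp only [Set.mem_preimage, phiMap_diagonal, Metric.mem_ball, dist_self]
    exact hε
  refine ⟨U, hUopen, hDU, phiMap x, P.symm, Tsub x, finrank_Tsub x, hφcd.contDiffOn, ?_, ?_, ?_⟩
  · -- smoothness of the inverse on the image
    intro z hz
    obtain ⟨y, hyU, rfl⟩ := hz
    have hysrc : y ∈ P.source := hyU.1.1
    have hyV : IsUnit (fderiv ℝ (phiMap x) y) := hyU.1.2
    obtain ⟨e, he⟩ := isUnit_toEquiv hyV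
    have htgt : phiMap x y ∈ P.target := by
      rw [← hPcoe]
      exact P.map_source hysrc
    have hsymm : P.symm (phiMap x y) = y := by
      rw [← hPcoe]
      exact P.left_inv hysrc
    have hfd : HasFDerivAt (phiMap x) (e : Mat →L[ℝ] Mat) (P.symm (phiMap x y)) := by
      rw [hsymm, he]
      exact ((hφcd.differentiable (by simp)) y).hasFDerivAt
    have hcd : ContDiffAt ℝ ((⊤ : ℕ∞) : WithTop ℕ∞) (⇑P) (P.symm (phiMap x y)) := by
      rw [hPcoe]
      exact hφcd.contDiffAt
    have := P.contDiffAt_symm htgt (by rw [← hPcoe] at hfd; exact hfd) hcd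
    exact this.contDiffWithinAt
  · intro y hy
    rw [← hPcoe]
    exact P.left_inv hy.1.1
  · -- the image identity
    apply Set.ext
    intro z
    constructor
    · rintro ⟨Y, ⟨hYM, hYU⟩, rfl⟩
      exact ⟨phiMap_mem_Tsub x hYM, Y, hYU, rfl⟩
    · rintro ⟨hzT, Y, hYU, rfl⟩
      have hzball : (⟨phiMap x Y, hzT⟩ : Tsub x) ∈ Metric.ball (0 : Tsub x) ε := by
        rw [mem_ball_zero_iff]
        have : ‖(⟨phiMap x Y, hzT⟩ : Tsub x)‖ = ‖phiMap x Y‖ := rfl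
        rw [this]
        exact mem_ball_zero_iff.mp hYU.2
      obtain ⟨A, hAS₀, hAeq⟩ := hball hzball
      set Y' := PhiT x (iotaT x A) with hY'def
      have hY'U₀ : Y' ∈ U₀ := hAS₀.1
      have hY'M : Y' ∈ Mset x := PhiT_mem x (A : Tsub x).2 hAS₀.2.1 hAS₀.2.2
      have hφY'T : phiMap x Y' ∈ Tsub x := phiMap_mem_Tsub x hY'M
      have hcoe : phiMap x Y' = phiMap x Y := by
        have h1 : ((etaMap x A : Tsub x) : Mat) = piT x (phiMap x Y') := rfl
        have h2 : ((etaMap x A : Tsub x) : Mat) = phiMap x Y := by rw [hAeq]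
        rw [← h2, h1, piT_of_mem x hφY'T]
      have hYY' : Y = Y' := by
        apply P.injOn (hYU.1.1) (hY'U₀.1)
        rw [hPcoe]
        exact hcoe.symm
      refine ⟨Y, ⟨?_, hYU⟩, rfl⟩
      rw [hYY']
      exact hY'M

lemma conj_mem_Mset {W : Mat} (hW : Wᵀ * W = 1) {A : Mat} (hA : A ∈ Mset x) :
    Wᵀ * A * W ∈ Mset x := by
  obtain ⟨U, hU, rfl⟩ := hA
  refine ⟨U * W, ?_, ?_⟩
  · rw [Matrix.transpose_mul, Matrix.mul_assoc, ← Matrix.mul_assoc Uᵀ U W, hU,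
      Matrix.one_mul, hW]
  · rw [Matrix.transpose_mul]
    simp only [Matrix.mul_assoc]

lemma transport {k : ℕ∞} {d : ℕ} (V : Mat) (hV : Vᵀ * V = 1)
    (h : IsCkManifoldAroundDim k d (Mset x) (Matrix.diagonal x)) :
    IsCkManifoldAroundDim k d (Mset x) (Vᵀ * Matrix.diagonal x * V) := by
  obtain ⟨U, hUopen, hDU, φ, ψ, F, hF, hφ, hψ, hinv, him⟩ := h
  have hV' : V * Vᵀ = 1 := mul_eq_one_comm.mp hV
  -- the conjugation continuous linear equivalence
  set cLin : Mat →ₗ[ℝ] Mat :=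
    { toFun := fun A => V * A * Vᵀ
      map_add' := by
        intro A B
        show V * (A + B) * Vᵀ = V * A * Vᵀ + V * B * Vᵀ
        rw [Matrix.mul_add, Matrix.add_mul]
      map_smul' := by
        intro c A
        show V * (c • A) * Vᵀ = c • (V * A * Vᵀ)
        rw [Matrix.mul_smul, Matrix.smul_mul] } with hcLin
  set cInv : Mat →ₗ[ℝ] Mat :=
    { toFun := fun A => Vᵀ * A * V
      map_add' := by
        intro A B
        show Vᵀ * (A + B) * V = Vᵀ * A * V + Vᵀ * B * V
        rw [Matrix.mul_add, Matrix.add_mul]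
      map_smul' := by
        intro c A
        show Vᵀ * (c • A) * V = c • (Vᵀ * A * V)
        rw [Matrix.mul_smul, Matrix.smul_mul] } with hcInv
  have hlr : ∀ A : Mat, cInv (cLin A) = A := by
    intro A
    show Vᵀ * (V * A * Vᵀ) * V = A
    simp only [← Matrix.mul_assoc]
    rw [hV, Matrix.one_mul, Matrix.mul_assoc, hV, Matrix.mul_one]
  have hrl : ∀ A : Mat, cLin (cInv A) = A := by
    intro A
    show V * (Vᵀ * A * V) * Vᵀ = A
    simp only [← Matrix.mul_assoc]
    rw [hV', Matrix.one_mul, Matrix.mul_assoc, hV', Matrix.mul_one]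
  set cL : Mat ≃L[ℝ] Mat :=
    { toLinearMap := cLin
      invFun := cInv
      left_inv := hlr
      right_inv := hrl
      continuous_toFun := cLin.toContinuousLinearMap.continuous
      continuous_invFun := cInv.toContinuousLinearMap.continuous } with hcL

  have hcLapp : ∀ A : Mat, cL A = V * A * Vᵀ := fun A => rfl
  have hcD : cL (Vᵀ * Matrix.diagonal x * V) = Matrix.diagonal x := by
    rw [hcLapp]
    calc V * (Vᵀ * Matrix.diagonal x * V) * Vᵀ
        = V * Vᵀ * Matrix.diagonal x * (V * Vᵀ) := by simp only [Matrix.mul_assoc]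
      _ = Matrix.diagonal x := by rw [hV', Matrix.one_mul, Matrix.mul_one]
  have hMself : ∀ A : Mat, A ∈ Mset x ↔ cL A ∈ Mset x := by
    intro A
    constructor
    · intro hA
      have : cL A = (Vᵀ)ᵀ * A * Vᵀ := by
        rw [hcLapp, Matrix.transpose_transpose]
      rw [this]
      exact conj_mem_Mset x (by rw [Matrix.transpose_transpose, hV']) hA
    · intro hA
      have := conj_mem_Mset x hV hA
      rwa [hcLapp, show Vᵀ * (V * A * Vᵀ) * V = A from hlr A] at this
  have hsetU : ⇑cL '' (⇑cL ⁻¹' U) = U := Set.image_preimage_eq U cL.surjective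
  have hsetM : ⇑cL '' (Mset x ∩ ⇑cL ⁻¹' U) = Mset x ∩ U := by
    ext B
    constructor
    · rintro ⟨A, ⟨hAM, hAU⟩, rfl⟩
      exact ⟨(hMself A).mp hAM, hAU⟩
    · rintro ⟨hBM, hBU⟩
      refine ⟨cL.symm B, ⟨?_, ?_⟩, cL.apply_symm_apply B⟩
      · rw [hMself (cL.symm B), cL.apply_symm_apply]
        exact hBM
      · show cL (cL.symm B) ∈ U
        rw [cL.apply_symm_apply]
        exact hBU
  refine ⟨cL ⁻¹' U, hUopen.preimage cL.continuous, by rw [Set.mem_preimage, hcD]; exact hDU,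
    φ ∘ cL, cL.symm ∘ ψ, F, hF, ?_, ?_, ?_, ?_⟩
  · exact hφ.comp ((cL : Mat →L[ℝ] Mat).contDiff.contDiffOn) (Set.mapsTo_preimage _ _)
  · have himg : (φ ∘ cL) '' (cL ⁻¹' U) = φ '' U := by
      rw [Set.image_comp, hsetU]
    rw [himg]
    exact ((cL.symm : Mat →L[ℝ] Mat).contDiff).comp_contDiffOn hψ
  · intro y hy
    have := hinv (cL y) hy
    simp only [Function.comp_apply, this, ContinuousLinearEquiv.symm_apply_apply]
  · rw [Set.image_comp, Set.image_comp, hsetM, hsetU, him]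

end MainLemma

end Helpers

/-- The fiber `λ⁻¹(x) = {Uᵀ Diag(x) U : U ∈ O(n)}` over a nonincreasing vector `x` is a smooth
submanifold of the symmetric matrices of dimension `Σ_{i<j} |I_i||I_j|`, i.e. the number of
pairs `i < j` with `x i ≠ x j`. -/
theorem eigenvalue_fiber_is_manifold (n : ℕ) (x : Fin n → ℝ) (hx : Antitone x) :
    ∀ X ∈ {X : Matrix (Fin n) (Fin n) ℝ |
        ∃ U : Matrix (Fin n) (Fin n) ℝ, Uᵀ * U = 1 ∧ X = Uᵀ * Matrix.diagonal x * U},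
      IsCkManifoldAroundDim (⊤ : ℕ∞)
        ((Finset.univ.filter fun p : Fin n × Fin n => p.1 < p.2 ∧ x p.1 ≠ x p.2).card)
        {X : Matrix (Fin n) (Fin n) ℝ |
          ∃ U : Matrix (Fin n) (Fin n) ℝ, Uᵀ * U = 1 ∧ X = Uᵀ * Matrix.diagonal x * U} X := by
  intro X hX
  obtain ⟨V, hV, rfl⟩ := hX
  show IsCkManifoldAroundDim (⊤ : ℕ∞) ((idxF x).card) (Mset x) (Vᵀ * Matrix.diagonal x * V)
  exact transport x V hV (main_at_diagonal x)
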